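/- With the curve γ of the previous statement and w1(β) = e^{2(K(β)+K''(β))} - 1, the map β ↦ w1(β) is a bijection from (β⁻, β⁺) onto (0, ∞), and -d/dβ log w1(β) = 4κ(κ'-κ)e^{-4β} / ((κκ' - e^{-4β})(e^{-4β} - κ²)) > 4κ/(κ'-κ) for all β ∈ (β⁻, β⁺). -/

import Mathlib

open Real

lemma w1_eq (κ κ' : ℝ) (h0 : 0 < κ) (h1 : κ < κ') (β : ℝ)
    (hβ : Real.exp (-4*β) < κ*κ') :
    Real.exp (2*((1/2) * Real.log ((κ' - κ) / (κ * κ' * Real.exp (2*β) - Real.exp (-2*β))) + (β + (1/2)*Real.log κ))) - 1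
      = (Real.exp (-4*β) - κ^2) / (κ*κ' - Real.exp (-4*β)) := by
  have he2 : (0:ℝ) < Real.exp (2*β) := Real.exp_pos _
  set a := Real.exp (2*β) with ha
  have hm2 : Real.exp (-2*β) = a⁻¹ := by
    rw [ha, ← Real.exp_neg]; ring_nf
  have hm4 : Real.exp (-4*β) = (a*a)⁻¹ := by
    rw [show (-4:ℝ)*β = -2*β + -2*β by ring, Real.exp_add, hm2, mul_inv]
  have hβ' : (a*a)⁻¹ < κ*κ' := by rw [← hm4]; exact hβ
  have haa : (0:ℝ) < a*a := mul_pos he2 he2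
  have h1' : 1 < κ*κ'*(a*a) := by
    have := mul_lt_mul_of_pos_right hβ' haa
    rwa [inv_mul_cancel₀ haa.ne'] at this
  have hden : 0 < κ * κ' * a - a⁻¹ := by
    have hinv : a⁻¹ * a = 1 := inv_mul_cancel₀ he2.ne'
    have : 0 < (κ * κ' * a - a⁻¹) * a := by nlinarith
    nlinarith [mul_pos (mul_pos he2 he2) he2]
  have hA : 0 < (κ' - κ) / (κ * κ' * a - a⁻¹) := div_pos (by linarith) hden
  rw [hm2, hm4]
  have expand : 2*((1/2) * Real.log ((κ' - κ) / (κ * κ' * a - a⁻¹)) + (β + (1/2)*Real.log κ))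
      = Real.log ((κ' - κ) / (κ * κ' * a - a⁻¹)) + 2*β + Real.log κ := by ring
  rw [expand, Real.exp_add, Real.exp_add, Real.exp_log hA, Real.exp_log h0, ← ha]
  have h3 : κ*κ' - (a*a)⁻¹ ≠ 0 := by linarith
  have h4 : -1 + κ'*κ*a^2 ≠ 0 := by nlinarith
  field_simp
  have hc : (-1 + κ'*κ*a^2) * (-1 + κ'*κ*a^2)⁻¹ = 1 := mul_inv_cancel₀ h4
  linear_combination hc

theorem curve_w1_properties (κ κ' : ℝ) (h0 : 0 < κ) (h1 : κ < κ') (h2 : κ' ≤ 1) :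
    let βm := -(1/4) * Real.log (κ * κ')
    let βp := -(1/2) * Real.log κ
    let K : ℝ → ℝ := fun β =>
      (1/2) * Real.log ((κ' - κ) / (κ * κ' * Real.exp (2*β) - Real.exp (-2*β)))
    let K'' : ℝ → ℝ := fun β => β + (1/2) * Real.log κ
    let w1 : ℝ → ℝ := fun β => Real.exp (2*(K β + K'' β)) - 1
    Set.BijOn w1 (Set.Ioo βm βp) (Set.Ioi 0) ∧
    ∀ β ∈ Set.Ioo βm βp,
      HasDerivAt (fun t => Real.log (w1 t))
        (-(4*κ*(κ'-κ)*Real.exp (-4*β) /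
            ((κ*κ' - Real.exp (-4*β)) * (Real.exp (-4*β) - κ^2)))) β ∧
      4*κ/(κ'-κ) <
        4*κ*(κ'-κ)*Real.exp (-4*β) /
          ((κ*κ' - Real.exp (-4*β)) * (Real.exp (-4*β) - κ^2)) := by
  intro βm βp K K'' w1
  have hκ' : 0 < κ' := h0.trans h1
  have hκκ' : 0 < κ * κ' := mul_pos h0 hκ'
  have hd : 0 < κ' - κ := sub_pos.2 h1
  have hκ2 : (0:ℝ) < κ^2 := by positivity
  have hnum0 : (0:ℝ) < κ*κ' - κ^2 := by nlinarith
  -- bounds on u = exp(-4β)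
  have hu : ∀ β ∈ Set.Ioo βm βp, κ^2 < Real.exp (-4*β) ∧ Real.exp (-4*β) < κ*κ' := by
    intro β hβ
    obtain ⟨hβ1, hβ2⟩ := hβ
    constructor
    · have : Real.log (κ^2) < -4*β := by
        rw [Real.log_pow]
        have : β < -(1/2) * Real.log κ := hβ2
        push_cast; nlinarith
      calc κ^2 = Real.exp (Real.log (κ^2)) := (Real.exp_log hκ2).symm
        _ < Real.exp (-4*β) := Real.exp_lt_exp.2 this
    · have : -4*β < Real.log (κ*κ') := by
        have : -(1/4) * Real.log (κ*κ') < β := hβ1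
        nlinarith
      calc Real.exp (-4*β) < Real.exp (Real.log (κ*κ')) := Real.exp_lt_exp.2 this
        _ = κ*κ' := Real.exp_log hκκ'
  -- formula for w1
  have hw : ∀ β ∈ Set.Ioo βm βp,
      w1 β = (Real.exp (-4*β) - κ^2) / (κ*κ' - Real.exp (-4*β)) := by
    intro β hβ
    exact w1_eq κ κ' h0 h1 β (hu β hβ).2
  -- positivity of w1
  have hwpos : ∀ β ∈ Set.Ioo βm βp, 0 < w1 β := by
    intro β hβ
    rw [hw β hβ]
    exact div_pos (by linarith [(hu β hβ).1]) (by linarith [(hu β hβ).2])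
  -- inverse function
  set g : ℝ → ℝ := fun y => -(1/4) * Real.log ((κ^2 + y*(κ*κ'))/(1+y)) with hgdef
  have hv : ∀ y : ℝ, 0 < y →
      κ^2 < (κ^2 + y*(κ*κ'))/(1+y) ∧ (κ^2 + y*(κ*κ'))/(1+y) < κ*κ' := by
    intro y hy
    have h1y : (0:ℝ) < 1 + y := by linarith
    constructor
    · rw [lt_div_iff₀ h1y]; nlinarith [mul_pos hy hnum0]
    · rw [div_lt_iff₀ h1y]; nlinarith [mul_pos hy hnum0]
  have hgexp : ∀ y : ℝ, 0 < y → Real.exp (-4 * g y) = (κ^2 + y*(κ*κ'))/(1+y) := by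
    intro y hy
    have hvpos : 0 < (κ^2 + y*(κ*κ'))/(1+y) := lt_trans hκ2 (hv y hy).1
    show Real.exp (-4 * (-(1/4) * Real.log ((κ^2 + y*(κ*κ'))/(1+y)))) = _
    rw [show -4 * (-(1/4) * Real.log ((κ^2 + y*(κ*κ'))/(1+y)))
        = Real.log ((κ^2 + y*(κ*κ'))/(1+y)) by ring]
    exact Real.exp_log hvpos
  have hgmem : ∀ y ∈ Set.Ioi (0:ℝ), g y ∈ Set.Ioo βm βp := by
    intro y hy
    have hy : 0 < y := hy
    obtain ⟨hv1, hv2⟩ := hv y hy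
    have hvpos : 0 < (κ^2 + y*(κ*κ'))/(1+y) := lt_trans hκ2 hv1
    constructor
    · show -(1/4) * Real.log (κ*κ') < -(1/4) * Real.log ((κ^2 + y*(κ*κ'))/(1+y))
      have := Real.log_lt_log hvpos hv2
      linarith
    · show -(1/4) * Real.log ((κ^2 + y*(κ*κ'))/(1+y)) < -(1/2) * Real.log κ
      have := Real.log_lt_log hκ2 hv1
      rw [Real.log_pow] at this
      push_cast at this
      linarith
  have hmapsTo : Set.MapsTo w1 (Set.Ioo βm βp) (Set.Ioi 0) := fun β hβ => hwpos β hβ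
  have hright : ∀ y ∈ Set.Ioi (0:ℝ), w1 (g y) = y := by
    intro y hy
    have hy : 0 < y := hy
    rw [hw (g y) (hgmem y hy), hgexp y hy]
    have h1y : (0:ℝ) < 1 + y := by linarith
    rw [show ((κ^2 + y*(κ*κ'))/(1+y) - κ^2) = y*(κ*κ' - κ^2)/(1+y) by
        field_simp; ring,
      show (κ*κ' - (κ^2 + y*(κ*κ'))/(1+y)) = (κ*κ' - κ^2)/(1+y) by
        field_simp; ring]
    rw [div_div_div_cancel_right₀]
    exact mul_div_cancel_right₀ y hnum0.ne'
    exact h1y.ne'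
  have hleft : ∀ β ∈ Set.Ioo βm βp, g (w1 β) = β := by
    intro β hβ
    obtain ⟨hu1, hu2⟩ := hu β hβ
    have hwβ := hw β hβ
    have hlogu : Real.log (Real.exp (-4*β)) = -4*β := Real.log_exp _
    revert hu1 hu2 hwβ hlogu
    generalize Real.exp (-4*β) = u
    intro hu1 hu2 hwβ hlogu
    have hdn : κ*κ' - u ≠ 0 := by linarith
    have h1w : 1 + w1 β ≠ 0 := by
      rw [hwβ]
      rw [show (1:ℝ) + (u - κ^2) / (κ*κ' - u) = (κ*κ' - κ^2) / (κ*κ' - u) by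
        field_simp; ring]
      positivity
    have key : (κ^2 + (w1 β)*(κ*κ'))/(1 + w1 β) = u := by
      rw [div_eq_iff h1w, hwβ]
      have hy1 : (u - κ^2)/(κ*κ'-u) * (κ*κ'-u) = u - κ^2 := div_mul_cancel₀ _ hdn
      linear_combination hy1
    show -(1/4) * Real.log ((κ^2 + (w1 β)*(κ*κ'))/(1 + w1 β)) = β
    rw [key, hlogu]; ring
  have hbij : Set.BijOn w1 (Set.Ioo βm βp) (Set.Ioi 0) :=
    Set.InvOn.bijOn ⟨fun β hβ => hleft β hβ, fun y hy => hright y hy⟩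
      hmapsTo (fun y hy => hgmem y hy)
  refine ⟨hbij, ?_⟩
  intro β hβ
  obtain ⟨hu1, hu2⟩ := hu β hβ
  have hun : Real.exp (-4*β) - κ^2 ≠ 0 := by linarith
  have hdn : κ*κ' - Real.exp (-4*β) ≠ 0 := by linarith
  constructor
  · -- derivative
    have hder0 : HasDerivAt (fun t : ℝ => Real.exp (-4*t)) (Real.exp (-4*β) * (-4)) β := by
      have h1 : HasDerivAt (fun t : ℝ => -4*t) (-4) β := by
        simpa using (hasDerivAt_id β).const_mul (-4:ℝ)
      exact h1.exp
    have h1d : HasDerivAt (fun t : ℝ => Real.exp (-4*t) - κ^2) (Real.exp (-4*β) * (-4)) β :=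
      hder0.sub_const _
    have h2d : HasDerivAt (fun t : ℝ => κ*κ' - Real.exp (-4*t)) (-(Real.exp (-4*β) * (-4))) β :=
      hder0.const_sub (κ*κ')
    have hlog1 := h1d.log hun
    have hlog2 := h2d.log hdn
    have hF := hlog1.sub hlog2
    have heq : (fun t => Real.log (w1 t)) =ᶠ[nhds β]
        (fun t => Real.log (Real.exp (-4*t) - κ^2) - Real.log (κ*κ' - Real.exp (-4*t))) := by
      filter_upwards [(isOpen_Ioo).mem_nhds hβ] with t ht
      obtain ⟨ht1, ht2⟩ := hu t ht
      rw [hw t ht, Real.log_div (by linarith) (by linarith)]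
    have hD := hF.congr_of_eventuallyEq heq
    refine HasDerivAt.congr_deriv hD ?_
    revert hun hdn hu1 hu2
    generalize Real.exp (-4*β) = u
    intro hun hdn hu1 hu2
    field_simp
    ring
  · -- inequality
    clear hun hdn
    revert hu1 hu2
    generalize Real.exp (-4*β) = u
    intro hu1 hu2
    rw [div_lt_div_iff₀ hd (by nlinarith : 0 < (κ*κ' - u) * (u - κ^2))]
    nlinarith [sq_nonneg (κ*κ' + κ^2 - 2*u), mul_pos h0 hd,
      mul_lt_mul_of_pos_left hu1 (mul_pos h0 (mul_pos hd hd)), mul_pos (mul_pos h0 hd) hd]
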